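/- Bin covering dominance swap lemma: Suppose a bin covering solution assigns item set B to bin m and every covered bin's total weight is at least the quota q. Let A be a feasible set (sum of weights ≥ q) whose items lie in other bins, and suppose B can be partitioned into subsets B₁,…,B_i with an injection mapping each a_k ∈ A to a distinct subset B_k such that w(a_k) ≤ Σ_{b ∈ B_k} w(b). Then swapping A into bin m and each B_k into the bin that contained a_k yields a solution in which every previously covered bin is still covered, and the number of covered bins does not decrease. -/

import Mathlib

/-- Bin covering dominance swap lemma: swapping `A` into bin `m` (in place of `B = bins m`)
and each fiber `B_k` into the bin that contained `a_k` keeps every previously covered bin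
covered, and the number of covered bins does not decrease. -/
theorem stmt_4 {α : Type*} [DecidableEq α] (w : α → ℕ) (q : ℕ) (n : ℕ)
    (S : Finset α) (bins : Fin n → Finset α)
    (hdisj : ∀ i j, i ≠ j → Disjoint (bins i) (bins j))
    (hcover : ∀ x ∈ S, ∃ i, x ∈ bins i) (hsub : ∀ i, bins i ⊆ S)
    (m : Fin n) (hBcov : q ≤ ∑ x ∈ bins m, w x)
    (A : Finset α) (hAS : A ⊆ S)
    (hAother : ∀ a ∈ A, a ∉ bins m)
    (hAfeas : q ≤ ∑ a ∈ A, w a)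
    (τ : α → α) (hτmaps : ∀ b ∈ bins m, τ b ∈ A)
    (hτdom : ∀ a ∈ A, w a ≤ ∑ b ∈ (bins m).filter (fun b => τ b = a), w b) :
    let bins' : Fin n → Finset α := fun i =>
      if i = m then A
      else ((bins i \ A) ∪ (bins m).filter (fun b => τ b ∈ bins i))
    (∀ i, q ≤ ∑ x ∈ bins i, w x → q ≤ ∑ x ∈ bins' i, w x) ∧
      (Finset.univ.filter (fun i => q ≤ ∑ x ∈ bins i, w x)).card ≤
        (Finset.univ.filter (fun i => q ≤ ∑ x ∈ bins' i, w x)).card := by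
  intro bins'
  have h1 : ∀ i, q ≤ ∑ x ∈ bins i, w x → q ≤ ∑ x ∈ bins' i, w x := by
    intro i hi
    by_cases h : i = m
    · simpa [bins', h] using hAfeas
    · simp only [bins', if_neg h]
      have hd : Disjoint (bins i \ A) ((bins m).filter (fun b => τ b ∈ bins i)) :=
        ((hdisj i m h).mono Finset.sdiff_subset (Finset.filter_subset _ _))
      rw [Finset.sum_union hd]
      have hsplit : ∑ x ∈ bins i ∩ A, w x + ∑ x ∈ bins i \ A, w x = ∑ x ∈ bins i, w x :=
        Finset.sum_inter_add_sum_sdiff _ _ _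
      have hfib : ∑ a ∈ bins i ∩ A, w a ≤
          ∑ b ∈ (bins m).filter (fun b => τ b ∈ bins i), w b := by
        have hle : ∑ a ∈ bins i ∩ A, w a ≤
            ∑ a ∈ bins i ∩ A, ∑ b ∈ (bins m).filter (fun b => τ b = a), w b :=
          Finset.sum_le_sum fun a ha => hτdom a (Finset.mem_inter.mp ha).2
        have hpd : ∀ a ∈ bins i ∩ A, ∀ a' ∈ bins i ∩ A, a ≠ a' →
            Disjoint ((bins m).filter (fun b => τ b = a))
              ((bins m).filter (fun b => τ b = a')) := by
          intro a _ a' _ hne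
          rw [Finset.disjoint_left]
          intro b hb hb'
          exact hne ((Finset.mem_filter.mp hb).2 ▸ (Finset.mem_filter.mp hb').2 ▸ rfl)
        have hsum : ∑ a ∈ bins i ∩ A, ∑ b ∈ (bins m).filter (fun b => τ b = a), w b =
            ∑ b ∈ (bins i ∩ A).biUnion (fun a => (bins m).filter (fun b => τ b = a)), w b :=
          (Finset.sum_biUnion hpd).symm
        have hsub2 : (bins i ∩ A).biUnion (fun a => (bins m).filter (fun b => τ b = a)) ⊆
            (bins m).filter (fun b => τ b ∈ bins i) := by
          intro b hb
          obtain ⟨a, ha, hb⟩ := Finset.mem_biUnion.mp hb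
          obtain ⟨hbm, hτ⟩ := Finset.mem_filter.mp hb
          exact Finset.mem_filter.mpr ⟨hbm, hτ ▸ (Finset.mem_inter.mp ha).1⟩
        calc ∑ a ∈ bins i ∩ A, w a ≤ _ := hle
          _ = _ := hsum
          _ ≤ _ := Finset.sum_le_sum_of_subset hsub2
      omega
  refine ⟨h1, Finset.card_le_card ?_⟩
  exact Finset.monotone_filter_right _ fun i _ hi => h1 i hi
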